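/- Let y₁,…,y_k ∈ ℝ^n be points all at equal distance r > 0 from x₀, let h(x) = (‖x−y₁‖²,…,‖x−y_k‖²), h₁(t) = t/∑t_j, and z₀ = h(x₀) = (r²,…,r²). Then the composition d_{z₀}h₁ ∘ d_{x₀}h is surjective onto the tangent space of the simplex (equivalently, h₁ ∘ h is a submersion at x₀) if and only if y₁,…,y_k form a non-degenerate (k−1)-dimensional simplex. -/

import Mathlib

open scoped RealInnerProductSpace
open ContinuousLinearMap

theorem key (n k : ℕ) [NeZero k] (y : Fin k → EuclideanSpace ℝ (Fin n)) :
    (∀ v : EuclideanSpace ℝ (Fin k), (∑ i, v i) = 0 →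
      ∃ x : EuclideanSpace ℝ (Fin n),
        ∀ i, ⟪(k:ℝ)⁻¹ • (∑ j, y j) - y i, x⟫ = v i) ↔ AffineIndependent ℝ y := by
  classical
  set m : EuclideanSpace ℝ (Fin n) := (k:ℝ)⁻¹ • (∑ j, y j) with hm
  set w : Fin k → EuclideanSpace ℝ (Fin n) := fun i => m - y i with hw
  have hk : (k:ℝ) ≠ 0 := Nat.cast_ne_zero.2 (NeZero.ne k)
  -- key identity: for u : Fin k → ℝ, ∑ u i • w i = (∑ u) • m - ∑ u i • y i
  have hsum : ∀ u : Fin k → ℝ, ∑ i, u i • w i = (∑ i, u i) • m - ∑ i, u i • y i := by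
    intro u
    simp [hw, smul_sub, Finset.sum_sub_distrib, ← Finset.sum_smul]
  constructor
  · intro hsurj
    rw [affineIndependent_iff]
    intro s u hsum0 hcomb0 e he
    -- extend u by zero outside s
    set u' : Fin k → ℝ := fun i => if i ∈ s then u i else 0 with hu'
    have hs0 : ∑ i, u' i = 0 := by
      rw [← hsum0]; simp [hu', Finset.sum_ite_mem]
    have hc0 : ∑ i, u' i • y i = 0 := by
      rw [← hcomb0]
      simp [hu', ite_smul, Finset.sum_ite_mem]
    have hw0 : ∑ i, u' i • w i = 0 := by rw [hsum, hs0, hc0]; simp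
    obtain ⟨x, hx⟩ := hsurj (WithLp.toLp 2 u') hs0
    have : ∑ i, u' i * u' i = 0 := by
      calc ∑ i, u' i * u' i = ∑ i, u' i * ⟪w i, x⟫ := by
            refine Finset.sum_congr rfl fun i _ => by rw [hx i]
        _ = ⟪∑ i, u' i • w i, x⟫ := by
            rw [sum_inner]; exact Finset.sum_congr rfl fun i _ => (real_inner_smul_left _ _ _).symm
        _ = 0 := by rw [hw0, inner_zero_left]
    have hall : ∀ i, u' i = 0 := by
      intro i
      have := Finset.sum_eq_zero_iff_of_nonneg (fun j _ => mul_self_nonneg (u' j)) |>.1 this i (Finset.mem_univ i)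
      exact mul_self_eq_zero.1 this
    have := hall e
    simpa [hu', he] using this
  · intro haff v hv
    set T : EuclideanSpace ℝ (Fin n) →ₗ[ℝ] EuclideanSpace ℝ (Fin k) :=
      { toFun := fun x => (WithLp.toLp 2 (fun i => ⟪w i, x⟫) : EuclideanSpace ℝ (Fin k))
        map_add' := fun a b => by ext i; simp [inner_add_right]
        map_smul' := fun c a => by ext i; simp [inner_smul_right] } with hT
    have hTapp : ∀ (x : EuclideanSpace ℝ (Fin n)) (i : Fin k), T x i = ⟪w i, x⟫ :=
      fun _ _ => rfl
    have hTq : ∀ (x : EuclideanSpace ℝ (Fin n)) (q' : EuclideanSpace ℝ (Fin k)),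
        ⟪∑ i, q' i • w i, x⟫ = ⟪T x, q'⟫ := by
      intro x q'
      rw [sum_inner, PiLp.inner_apply]
      refine Finset.sum_congr rfl fun i _ => ?_
      rw [real_inner_smul_left, hTapp]
      simp [RCLike.inner_apply, mul_comm]
    set R : Submodule ℝ (EuclideanSpace ℝ (Fin k)) := LinearMap.range T with hR
    have hvR : v ∈ Rᗮᗮ := by
      rw [Submodule.mem_orthogonal]
      intro q hq
      have hq' : ∀ x : EuclideanSpace ℝ (Fin n), ⟪T x, q⟫ = 0 := fun x => by
        rw [real_inner_comm]
        exact (Submodule.mem_orthogonal' R q).1 hq (T x) (LinearMap.mem_range_self T x)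
      have hwq : ∑ i, q i • w i = 0 := by
        have h0 := hq' (∑ i, q i • w i)
        rw [← hTq] at h0
        exact inner_self_eq_zero.1 h0
      set s := ∑ i, q i with hs
      have hqy : ∑ i, q i • y i = s • m := by
        have h1 := hsum q
        rw [hwq] at h1
        exact (sub_eq_zero.1 h1.symm).symm
      have hconst : ∀ i, q i = s / k := by
        intro i
        set u : Fin k → ℝ := fun i => q i - s / k with hu
        have h1 : ∑ i, u i = 0 := by
          simp [hu, Finset.sum_sub_distrib, ← hs]
          field_simp
          ring
        have h2 : ∑ i, u i • y i = 0 := by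
          simp only [hu, sub_smul, Finset.sum_sub_distrib, hqy, hm, ← Finset.smul_sum,
            smul_smul, div_eq_mul_inv, sub_self]
        have h3 := affineIndependent_iff.1 haff Finset.univ u h1 h2 i (Finset.mem_univ i)
        have h4 : q i - s / ↑k = 0 := h3
        linarith
      simp only [PiLp.inner_apply, RCLike.inner_apply, conj_trivial]
      have hterm : ∀ i ∈ Finset.univ, q i * v i = (s / ↑k) * v i :=
        fun i _ => by rw [hconst i]
      rw [Finset.sum_congr rfl (fun i _ => mul_comm (v i) (q i))]
      rw [Finset.sum_congr rfl hterm, ← Finset.mul_sum, hv, mul_zero]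
    rw [Submodule.orthogonal_orthogonal] at hvR
    obtain ⟨x, hx⟩ := hvR
    exact ⟨x, fun i => by rw [← hx]; rfl⟩



/-- For points `y₁, …, y_k` at equal distance `r > 0` from `x₀`, the composition
`d_{z₀}h₁ ∘ d_{x₀}h` is surjective onto the tangent space `{∑ vᵢ = 0}` of the simplex
iff `y₁, …, y_k` form a non-degenerate `(k-1)`-simplex (are affinely independent). -/
theorem submersion_iff_nondegenerate_simplex (n k : ℕ) [NeZero k]
    (x₀ : EuclideanSpace ℝ (Fin n)) (y : Fin k → EuclideanSpace ℝ (Fin n))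
    (r : ℝ) (hr : 0 < r) (hdist : ∀ i, ‖x₀ - y i‖ = r)
    (h : EuclideanSpace ℝ (Fin n) → EuclideanSpace ℝ (Fin k))
    (hh : ∀ x i, h x i = ‖x - y i‖ ^ 2)
    (h₁ : EuclideanSpace ℝ (Fin k) → EuclideanSpace ℝ (Fin k))
    (hh₁ : ∀ t : EuclideanSpace ℝ (Fin k), (∀ i, 0 < t i) →
      h₁ t = (∑ i, t i)⁻¹ • t) :
    (∀ v : EuclideanSpace ℝ (Fin k), (∑ i, v i) = 0 →
        ∃ x : EuclideanSpace ℝ (Fin n), fderiv ℝ h₁ (h x₀) (fderiv ℝ h x₀ x) = v) ↔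
      AffineIndependent ℝ y := by
  classical
  have hk : (k:ℝ) ≠ 0 := Nat.cast_ne_zero.2 (NeZero.ne k)
  have hr2 : (0:ℝ) < r ^ 2 := by positivity
  have hz : ∀ i, h x₀ i = r ^ 2 := fun i => by rw [hh, hdist]
  have hzsum : (∑ i, h x₀ i) = k * r ^ 2 := by
    simp [hz, Finset.sum_const, Finset.card_univ, mul_comm]
  have hzs_ne : (∑ i, h x₀ i) ≠ 0 := by
    rw [hzsum]; positivity
  -- the derivative of h at x₀
  set A : EuclideanSpace ℝ (Fin n) →L[ℝ] EuclideanSpace ℝ (Fin k) :=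
    (PiLp.continuousLinearEquiv 2 ℝ (fun _ : Fin k => ℝ)).symm.toContinuousLinearMap.comp
      (ContinuousLinearMap.pi fun i => (2:ℝ) • (innerSL ℝ (x₀ - y i))) with hAdef
  have hA : HasFDerivAt h A x₀ := by
    rw [← hasFDerivWithinAt_univ, hasFDerivWithinAt_piLp]
    intro i
    rw [hasFDerivWithinAt_univ]
    have hfun : (fun x => h x i) = fun x => ⟪x - y i, x - y i⟫ := by
      funext x
      rw [hh, real_inner_self_eq_norm_sq]
    have hsub : HasFDerivAt (fun x : EuclideanSpace ℝ (Fin n) => x - y i)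
        (ContinuousLinearMap.id ℝ (EuclideanSpace ℝ (Fin n))) x₀ :=
      (hasFDerivAt_id x₀).sub_const (y i)
    have hi := (hsub.inner ℝ hsub).congr_fderiv
      (g' := PiLp.proj 2 (fun _ : Fin k => ℝ) i ∘L A) ?_
    · rw [hfun]; exact hi
    · ext x
      simp [hAdef, fderivInnerCLM_apply, real_inner_comm, two_mul, mul_sub, sub_mul,
        mul_comm, Finset.sum_sub_distrib]
      linarith [real_inner_comm x₀ x, real_inner_comm (y i) x, inner_sub_right (𝕜 := ℝ) x x₀ (y i),
        inner_sub_left (𝕜 := ℝ) x₀ (y i) x, real_inner_comm (x₀ - y i) x]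
  have hAapp : ∀ (x : EuclideanSpace ℝ (Fin n)) i, A x i = 2 * ⟪x₀ - y i, x⟫ := by
    intro x i
    simp [hAdef, smul_eq_mul, sub_mul, Finset.sum_sub_distrib, inner_sub_left]
  -- the derivative of h₁ at h x₀
  set S : EuclideanSpace ℝ (Fin k) →L[ℝ] ℝ := ∑ i, EuclideanSpace.proj i with hS
  have hSapp : ∀ t : EuclideanSpace ℝ (Fin k), S t = ∑ i, t i := by
    intro t; simp [hS, ContinuousLinearMap.sum_apply]
  set B : EuclideanSpace ℝ (Fin k) →L[ℝ] EuclideanSpace ℝ (Fin k) :=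
    (∑ i, h x₀ i)⁻¹ • ContinuousLinearMap.id ℝ (EuclideanSpace ℝ (Fin k)) +
      ((smulRight (1 : ℝ →L[ℝ] ℝ) (-((∑ i, h x₀ i) ^ 2)⁻¹)).comp S).smulRight (h x₀) with hBdef
  have hB : HasFDerivAt (fun t : EuclideanSpace ℝ (Fin k) => (∑ i, t i)⁻¹ • t) B (h x₀) := by
    have hsum : HasFDerivAt (fun t : EuclideanSpace ℝ (Fin k) => ∑ i, t i) S (h x₀) := by
      have := S.hasFDerivAt (x := h x₀)
      exact this.congr_of_eventuallyEq (.of_forall fun t => (hSapp t).symm)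
    have hinv : HasFDerivAt (fun t : EuclideanSpace ℝ (Fin k) => (∑ i, t i)⁻¹)
        ((smulRight (1 : ℝ →L[ℝ] ℝ) (-((∑ i, h x₀ i) ^ 2)⁻¹)).comp S) (h x₀) :=
      (hasFDerivAt_inv (𝕜 := ℝ) hzs_ne).comp (h x₀) hsum
    have := hinv.smul (hasFDerivAt_id (h x₀))
    exact this
  have hBapp : ∀ (u : EuclideanSpace ℝ (Fin k)) i,
      B u i = (∑ j, h x₀ j)⁻¹ * u i + -((∑ j, h x₀ j) ^ 2)⁻¹ * (∑ j, u j) * h x₀ i := by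
    intro u i
    simp [hBdef, hSapp, smul_eq_mul, mul_comm, mul_assoc, mul_left_comm, Finset.sum_mul]
  -- identify the fderivs
  have hfdh : fderiv ℝ h x₀ = A := hA.fderiv
  have hfdh₁ : fderiv ℝ h₁ (h x₀) = B := by
    have hopen : IsOpen {t : EuclideanSpace ℝ (Fin k) | ∀ i, 0 < t i} := by
      have heq : {t : EuclideanSpace ℝ (Fin k) | ∀ i, 0 < t i}
          = ⋂ i, {t : EuclideanSpace ℝ (Fin k) | 0 < t i} := by ext t; simp [Set.mem_iInter]
      rw [heq]
      exact isOpen_iInter_of_finite fun i =>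
        isOpen_lt continuous_const (EuclideanSpace.proj (𝕜 := ℝ) i).continuous
    have hmem : h x₀ ∈ {t : EuclideanSpace ℝ (Fin k) | ∀ i, 0 < t i} := fun i => by
      rw [hz]; exact hr2
    have hev : h₁ =ᶠ[nhds (h x₀)] fun t : EuclideanSpace ℝ (Fin k) => (∑ i, t i)⁻¹ • t :=
      Filter.eventuallyEq_of_mem (hopen.mem_nhds hmem) fun t ht => hh₁ t ht
    rw [hev.fderiv_eq, hB.fderiv]
  -- the composition, explicitly
  set c0 : ℝ := 2 / (k * r ^ 2) with hc0
  have hc0ne : c0 ≠ 0 := by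
    rw [hc0]; positivity
  set m : EuclideanSpace ℝ (Fin n) := (k:ℝ)⁻¹ • (∑ j, y j) with hm
  have hcomp : ∀ (x : EuclideanSpace ℝ (Fin n)) i, B (A x) i = c0 * ⟪m - y i, x⟫ := by
    intro x i
    rw [hBapp, hAapp]
    have hsum2 : (∑ j, A x j) = 2 * ((k : ℝ) * ⟪x₀, x⟫ - ∑ j, ⟪y j, x⟫) := by
      have : ∀ j, A x j = 2 * (⟪x₀, x⟫ - ⟪y j, x⟫) := fun j => by
        rw [hAapp, inner_sub_left]
      simp only [this]
      rw [← Finset.mul_sum, Finset.sum_sub_distrib, Finset.sum_const, Finset.card_univ,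
        Fintype.card_fin, nsmul_eq_mul]
    rw [hsum2, hzsum, hz]
    have hrhs : ⟪m - y i, x⟫ = (k:ℝ)⁻¹ * (∑ j, ⟪y j, x⟫) - ⟪y i, x⟫ := by
      rw [hm, inner_sub_left, real_inner_smul_left, sum_inner]
    rw [hrhs, inner_sub_left, hc0]
    have hrne : r ^ 2 ≠ 0 := ne_of_gt hr2
    field_simp
    ring
  -- reduce to the linear-algebra statement
  rw [← key n k y]
  simp only [hfdh, hfdh₁]
  constructor
  · intro H v hv
    obtain ⟨x, hx⟩ := H (c0 • v) (by
      simp only [PiLp.smul_apply, smul_eq_mul, ← Finset.mul_sum, hv, mul_zero])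
    refine ⟨x, fun i => ?_⟩
    have h1 : B (A x) i = (c0 • v) i := by rw [hx]
    rw [hcomp] at h1
    have h2 : (c0 • v) i = c0 * v i := rfl
    rw [h2] at h1
    exact mul_left_cancel₀ hc0ne h1
  · intro H v hv
    obtain ⟨x, hx⟩ := H (c0⁻¹ • v) (by
      simp only [PiLp.smul_apply, smul_eq_mul, ← Finset.mul_sum, hv, mul_zero])
    refine ⟨x, ?_⟩
    ext i
    rw [hcomp, hx i]
    have hci : (c0⁻¹ • v) i = c0⁻¹ * v i := rfl
    rw [hci, ← mul_assoc, mul_inv_cancel₀ hc0ne, one_mul]
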